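/- Let A be a local ring whose residue field k is commutative. Suppose p, q ∈ A[x] are polynomials of degrees r and s respectively, with p monic, and suppose A[x]p + A[x]q = A[x] (as left ideals). Then there exist polynomials p₁, q₁ ∈ A[x] such that deg(p₁) = deg(q), deg(q₁) = deg(p), p₁p = q₁q, and q₁ is monic. -/

import Mathlib

open Polynomial

section Aux

variable {A : Type*} [Ring A] {K : Type*} [Field K]

/-- Right division by a monic polynomial over a (possibly non-commutative) ring:
`f = g * p + ρ` with `deg ρ < deg p`. -/
private theorem right_div_monic [Nontrivial A] {p : A[X]} (hp : p.Monic) (f : A[X]) :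
    ∃ g ρ : A[X], f = g * p + ρ ∧ ρ.degree < p.degree := by
  have H : ∀ n (f : A[X]), f.natDegree ≤ n → ∃ g ρ : A[X], f = g * p + ρ ∧ ρ.degree < p.degree := by
    intro n
    induction n using Nat.strong_induction_on with
    | _ n ih =>
      intro f hf
      by_cases hlt : f.degree < p.degree
      · exact ⟨0, f, by rw [zero_mul, zero_add], hlt⟩
      · push_neg at hlt
        have hf0 : f ≠ 0 := by
          rintro rfl
          rw [degree_zero, le_bot_iff, degree_eq_bot] at hlt
          exact hp.ne_zero hlt
        have hnd : p.natDegree ≤ f.natDegree := natDegree_le_natDegree hlt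
        set z : A[X] := C f.leadingCoeff * X ^ (f.natDegree - p.natDegree) with hz
        have hzpdeg : (z * p).degree = f.degree := by
          rw [hp.degree_mul, hz, degree_C_mul_X_pow _ (leadingCoeff_ne_zero.mpr hf0),
            degree_eq_natDegree hp.ne_zero, degree_eq_natDegree hf0, ← Nat.cast_add,
            Nat.sub_add_cancel hnd]
        have hzl : (z * p).leadingCoeff = f.leadingCoeff := by
          rw [leadingCoeff_mul_monic hp, hz, leadingCoeff_mul_X_pow, leadingCoeff_C]
        have hsub : (f - z * p).degree < f.degree :=
          degree_sub_lt hzpdeg.symm hf0 hzl.symm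
        by_cases h0 : f - z * p = 0
        · refine ⟨z, 0, ?_, ?_⟩
          · rw [add_zero, ← sub_eq_zero, h0]
          · rw [degree_zero]
            exact bot_lt_iff_ne_bot.mpr (fun hb => hp.ne_zero (degree_eq_bot.mp hb))
        · have hlt' : (f - z * p).natDegree < n :=
            lt_of_lt_of_le (natDegree_lt_natDegree h0 hsub) hf
          obtain ⟨g, ρ, hrep, hρ⟩ := ih _ hlt' (f - z * p) le_rfl
          exact ⟨z + g, ρ, by rw [add_mul, add_assoc, ← hrep, add_sub_cancel], hρ⟩
  exact H f.natDegree f le_rfl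

/-- Solving a "unitriangular mod the maximal ideal" linear system over a local ring. -/
private theorem solve_delta (π : A →+* K) (hπker : ∀ a : A, π a = 0 ↔ ¬ IsUnit a) :
    ∀ (n : ℕ) (v : Fin n → Fin n → A),
      (∀ i j, π (v i j) = if i = j then 1 else 0) →
      ∀ w : Fin n → A, ∃ c : Fin n → A, ∀ j, ∑ i, c i * v i j = w j := by
  intro n
  induction n with
  | zero => exact fun v _ w => ⟨fun _ => 0, fun j => j.elim0⟩
  | succ n ih =>
    intro v hv w
    have h00 : π (v 0 0) = 1 := by simpa using hv 0 0
    have ha : IsUnit (v 0 0) := by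
      by_contra h
      rw [← hπker] at h
      rw [h00] at h
      exact one_ne_zero h
    obtain ⟨a, hav⟩ := ha
    have ha'v : (↑a⁻¹ : A) * v 0 0 = 1 := by rw [← hav]; exact a.inv_mul
    set a' : A := (↑a⁻¹ : A) with ha'
    set u : Fin n → Fin n → A :=
      fun i j => v i.succ j.succ - v i.succ 0 * (a' * v 0 j.succ) with hu
    have hu' : ∀ i j, π (u i j) = if i = j then 1 else 0 := by
      intro i j
      have h1 : π (v i.succ 0) = 0 := by rw [hv]; simp [Fin.succ_ne_zero]
      rw [hu]
      simp only [map_sub, map_mul, h1, zero_mul, sub_zero, hv]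
      simp [Fin.succ_inj]
    obtain ⟨d, hd⟩ := ih u hu' (fun i => w i.succ - w 0 * (a' * v 0 i.succ))
    set S : A := ∑ i, d i * v i.succ 0 with hS
    refine ⟨Fin.cases ((w 0 - S) * a') d, fun j => ?_⟩
    rw [Fin.sum_univ_succ]
    simp only [Fin.cases_zero, Fin.cases_succ]
    refine Fin.cases ?_ (fun j => ?_) j
    · rw [mul_assoc, ha'v, mul_one, hS, sub_add_cancel]
    · set t : A := a' * v 0 j.succ with ht
      have hsum : ∑ i, d i * v i.succ j.succ = w j.succ - w 0 * t + S * t := by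
        have h1 := hd j
        have h2 : ∀ i, d i * u i j = d i * v i.succ j.succ - d i * v i.succ 0 * t := by
          intro i
          rw [hu, mul_sub, mul_assoc]
        rw [Finset.sum_congr rfl (fun i _ => h2 i), Finset.sum_sub_distrib, ← Finset.sum_mul,
          ← hS, ← ht] at h1
        rw [sub_eq_iff_eq_add] at h1
        exact h1
      rw [mul_assoc, ← ht, hsum, sub_mul]
      abel

/-- If the reductions of the row vectors `v i` span `K^n`, then the `v i` span `A^n`. -/
private theorem solve_span (π : A →+* K) (hπsurj : Function.Surjective π)
    (hπker : ∀ a : A, π a = 0 ↔ ¬ IsUnit a) (n : ℕ) (v : Fin n → Fin n → A)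
    (hv : ∀ w : Fin n → K, ∃ c : Fin n → K, ∀ j, ∑ i, c i * π (v i j) = w j)
    (w : Fin n → A) : ∃ c : Fin n → A, ∀ j, ∑ i, c i * v i j = w j := by
  choose σ hσ using hπsurj
  choose cc hcc using fun k : Fin n => hv (fun j => if k = j then 1 else 0)
  set vt : Fin n → Fin n → A := fun k j => ∑ i, σ (cc k i) * v i j with hvt
  have hvt' : ∀ k j, π (vt k j) = if k = j then 1 else 0 := by
    intro k j
    rw [hvt]
    simp only [map_sum, map_mul, hσ]
    exact hcc k j
  obtain ⟨d, hd⟩ := solve_delta π hπker n vt hvt' w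
  refine ⟨fun i => ∑ k, d k * σ (cc k i), fun j => ?_⟩
  calc ∑ i, (∑ k, d k * σ (cc k i)) * v i j
      = ∑ i, ∑ k, d k * (σ (cc k i) * v i j) := by
        simp [Finset.sum_mul, mul_assoc]
    _ = ∑ k, ∑ i, d k * (σ (cc k i) * v i j) := Finset.sum_comm
    _ = ∑ k, d k * vt k j := by simp [hvt, Finset.mul_sum]
    _ = w j := hd j

end Aux

/-- Let `A` be a (possibly non-commutative) local ring whose residue field `K` is commutative,
encoded by a surjective ring homomorphism `π : A → K` onto a field whose kernel is exactly the
set of non-units of `A`.  Suppose `p, q ∈ A[x]` are polynomials of degrees `r` and `s`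
respectively, with `p` monic, and suppose `A[x]p + A[x]q = A[x]` as left ideals (in Mathlib,
`Ideal` over a non-commutative ring means left ideal, and `Ideal.span {p}` is `A[x]p`).  Then
there exist polynomials `p₁, q₁ ∈ A[x]` with `deg p₁ = deg q`, `deg q₁ = deg p`, `p₁p = q₁q`,
and `q₁` monic. -/
theorem exists_ore_like_relation
    {A : Type*} [Ring A] {K : Type*} [Field K]
    (π : A →+* K) (hπsurj : Function.Surjective π)
    (hπker : ∀ a : A, π a = 0 ↔ ¬ IsUnit a)
    (p q : A[X]) (r s : ℕ)
    (hpdeg : p.degree = (r : WithBot ℕ)) (hqdeg : q.degree = (s : WithBot ℕ))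
    (hp : p.Monic)
    (hspan : Ideal.span {p} ⊔ Ideal.span {q} = (⊤ : Ideal A[X])) :
    ∃ p₁ q₁ : A[X], p₁.degree = q.degree ∧ q₁.degree = p.degree ∧
      p₁ * p = q₁ * q ∧ q₁.Monic := by
  have : Nontrivial A := ⟨0, 1, fun h => by simpa using congrArg π h⟩
  -- extract a Bézout relation `u * p + v * q = 1`
  have h1 : (1 : A[X]) ∈ Ideal.span {p} ⊔ Ideal.span {q} := by rw [hspan]; exact Submodule.mem_top
  rw [Submodule.mem_sup] at h1
  obtain ⟨pu, hpu, qv, hqv, huv⟩ := h1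
  rw [Ideal.mem_span_singleton'] at hpu hqv
  obtain ⟨u, rfl⟩ := hpu
  obtain ⟨v, rfl⟩ := hqv
  -- right division data: `X^i * q = h i * p + ρ i`
  choose h ρ hrep hρ using fun i : ℕ => right_div_monic hp (X ^ i * q)
  have hρr : ∀ i, (ρ i).degree < (r : WithBot ℕ) := fun i => hpdeg ▸ hρ i
  -- reductions modulo the maximal ideal
  set P : K[X] := p.map π with hP
  set Q : K[X] := q.map π with hQ
  have hPmonic : P.Monic := hp.map π
  have hPdeg : P.degree = (r : WithBot ℕ) := by rw [hP, hp.degree_map, hpdeg]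
  have hUV : (u.map π) * P + (v.map π) * Q = 1 := by
    have h2 := congrArg (Polynomial.map π) huv
    rw [Polynomial.map_add, Polynomial.map_mul, Polynomial.map_mul, Polynomial.map_one] at h2
    rw [hP, hQ]
    exact h2
  have hrepK : ∀ i : ℕ, (X : K[X]) ^ i * Q = (h i).map π * P + (ρ i).map π := by
    intro i
    have h2 := congrArg (Polynomial.map π) (hrep i)
    rw [Polynomial.map_add, Polynomial.map_mul, Polynomial.map_mul, Polynomial.map_pow,
      Polynomial.map_X] at h2
    rw [hP, hQ]
    exact h2
  have hρKdeg : ∀ i : ℕ, ((ρ i).map π).degree < (r : WithBot ℕ) :=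
    fun i => lt_of_le_of_lt (degree_map_le) (hρr i)
  -- the spanning hypothesis over the residue field
  have hspanK : ∀ w : Fin r → K, ∃ c : Fin r → K,
      ∀ j : Fin r, ∑ i : Fin r, c i * π ((ρ (i : ℕ)).coeff (j : ℕ)) = w j := by
    rcases Nat.eq_zero_or_pos r with hr | hr
    · subst hr
      exact fun w => ⟨fun _ => 0, fun j => j.elim0⟩
    intro w
    set U : K[X] := u.map π with hU
    set V : K[X] := v.map π with hV
    set W : K[X] := ∑ j : Fin r, C (w j) * X ^ (j : ℕ) with hW
    have hWdeg : W.degree < (r : WithBot ℕ) := by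
      refine lt_of_le_of_lt (degree_sum_le _ _) ?_
      rw [Finset.sup_lt_iff (by exact_mod_cast WithBot.bot_lt_coe r)]
      intro b _
      exact lt_of_le_of_lt (degree_C_mul_X_pow_le _ _) (by exact_mod_cast b.isLt)
    set g : K[X] := (W * V) %ₘ P with hg
    have hgdeg : g.degree < (r : WithBot ℕ) := hPdeg ▸ degree_modByMonic_lt _ hPmonic
    have hgnat : g.natDegree < r := by
      rcases eq_or_ne g 0 with h0 | h0
      · rw [h0, natDegree_zero]; exact hr
      · exact (natDegree_lt_iff_degree_lt h0).mpr hgdeg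
    have hgsum : g = ∑ i : Fin r, C (g.coeff (i : ℕ)) * X ^ (i : ℕ) := by
      conv_lhs => rw [g.as_sum_range' r hgnat]
      rw [← Fin.sum_univ_eq_sum_range]
      simp [C_mul_X_pow_eq_monomial]
    set T : K[X] := ∑ i : Fin r, C (g.coeff (i : ℕ)) * ((h (i : ℕ)).map π) with hT
    set S : K[X] := ∑ i : Fin r, C (g.coeff (i : ℕ)) * ((ρ (i : ℕ)).map π) with hS
    have hSdeg : S.degree < (r : WithBot ℕ) := by
      refine lt_of_le_of_lt (degree_sum_le _ _) ?_
      rw [Finset.sup_lt_iff (by exact_mod_cast WithBot.bot_lt_coe r)]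
      intro b _
      calc (C (g.coeff (b : ℕ)) * ((ρ (b : ℕ)).map π)).degree
          = ((g.coeff (b : ℕ)) • ((ρ (b : ℕ)).map π)).degree := by rw [smul_eq_C_mul]
        _ ≤ ((ρ (b : ℕ)).map π).degree := degree_smul_le _ _
        _ < (r : WithBot ℕ) := hρKdeg _
    have hS1 : S = g * Q - T * P := by
      rw [hS]
      have : ∀ i : Fin r, C (g.coeff (i : ℕ)) * ((ρ (i : ℕ)).map π) =
          (C (g.coeff (i : ℕ)) * X ^ (i : ℕ)) * Q -
            (C (g.coeff (i : ℕ)) * ((h (i : ℕ)).map π)) * P := by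
        intro i
        have := hrepK (i : ℕ)
        have hrw : ((ρ (i : ℕ)).map π) = (X : K[X]) ^ (i : ℕ) * Q - (h (i : ℕ)).map π * P := by
          rw [this]; ring
        rw [hrw]; ring
      rw [Finset.sum_congr rfl (fun i _ => this i), Finset.sum_sub_distrib, ← Finset.sum_mul,
        ← Finset.sum_mul, ← hgsum, ← hT]
    have hgW : g = W * V - P * ((W * V) /ₘ P) := by
      have h2 := modByMonic_add_div (W * V) P
      rw [hg, eq_sub_iff_add_eq]
      exact h2
    have key : S - W = (-(W * U) - ((W * V) /ₘ P) * Q - T) * P := by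
      rw [hS1, hgW]
      linear_combination W * hUV
    have hzero : S - W = 0 := by
      refine eq_zero_of_dvd_of_degree_lt (p := P) (q := S - W)
        ⟨-(W * U) - ((W * V) /ₘ P) * Q - T, ?_⟩ ?_
      · rw [key]; ring
      · rw [hPdeg]
        exact lt_of_le_of_lt (degree_sub_le _ _) (max_lt hSdeg hWdeg)
    have hSW : S = W := sub_eq_zero.mp hzero
    refine ⟨fun i => g.coeff (i : ℕ), fun j => ?_⟩
    have hcoeff := congrArg (fun f : K[X] => f.coeff (j : ℕ)) hSW
    simp only [hS, finset_sum_coeff, coeff_C_mul, coeff_map] at hcoeff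
    rw [hcoeff, hW, finset_sum_coeff]
    simp only [coeff_C_mul, coeff_X_pow]
    rw [Finset.sum_eq_single j (fun b _ hb => by
      rw [if_neg (fun hh => hb (Fin.ext hh.symm)), mul_zero])
      (fun hj => absurd (Finset.mem_univ j) hj)]
    simp
  -- solve over A
  obtain ⟨c, hc⟩ := solve_span π hπsurj hπker r (fun i j => (ρ (i : ℕ)).coeff (j : ℕ)) hspanK
    (fun j => -((ρ r).coeff (j : ℕ)))
  -- assemble p₁ and q₁
  set q₁ : A[X] := X ^ r + ∑ i : Fin r, C (c i) * X ^ (i : ℕ) with hq₁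
  set p₁ : A[X] := h r + ∑ i : Fin r, C (c i) * h (i : ℕ) with hp₁
  have hsumdeg : (∑ i : Fin r, C (c i) * X ^ (i : ℕ) : A[X]).degree < (r : WithBot ℕ) := by
    refine lt_of_le_of_lt (degree_sum_le _ _) ?_
    rw [Finset.sup_lt_iff (by exact_mod_cast WithBot.bot_lt_coe r)]
    intro b _
    exact lt_of_le_of_lt (degree_C_mul_X_pow_le _ _) (by exact_mod_cast b.isLt)
  have hq₁monic : q₁.Monic := monic_X_pow_add hsumdeg
  have hq₁deg : q₁.degree = (r : WithBot ℕ) := by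
    rw [hq₁, degree_add_eq_left_of_degree_lt (by rw [degree_X_pow]; exact hsumdeg), degree_X_pow]
  have hzero : ρ r + ∑ i : Fin r, C (c i) * ρ (i : ℕ) = 0 := by
    apply Polynomial.ext
    intro j
    rcases lt_or_ge j r with hj | hj
    · have := hc ⟨j, hj⟩
      simp only [coeff_add, finset_sum_coeff, coeff_C_mul, coeff_zero]
      rw [show ((⟨j, hj⟩ : Fin r) : ℕ) = j from rfl] at this
      rw [this]
      simp
    · have h1 : (ρ r).coeff j = 0 :=
        coeff_eq_zero_of_degree_lt (lt_of_lt_of_le (hρr r) (by exact_mod_cast hj))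
      have h2 : ∀ i : Fin r, (C (c i) * ρ (i : ℕ)).coeff j = 0 := by
        intro i
        rw [coeff_C_mul, coeff_eq_zero_of_degree_lt
          (lt_of_lt_of_le (hρr (i : ℕ)) (by exact_mod_cast hj)), mul_zero]
      simp only [coeff_add, finset_sum_coeff, coeff_zero, h1]
      rw [Finset.sum_congr rfl (fun i _ => h2 i)]
      simp
  have hmain : q₁ * q = p₁ * p := by
    have e1 : q₁ * q = X ^ r * q + ∑ i : Fin r, C (c i) * (X ^ (i : ℕ) * q) := by
      rw [hq₁, add_mul, Finset.sum_mul]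
      simp [mul_assoc]
    have e2 : ∀ i : Fin r, C (c i) * (X ^ (i : ℕ) * q) =
        (C (c i) * h (i : ℕ)) * p + C (c i) * ρ (i : ℕ) := by
      intro i
      rw [hrep (i : ℕ), mul_add, mul_assoc]
    rw [e1, hrep r, Finset.sum_congr rfl (fun i _ => e2 i), Finset.sum_add_distrib,
      ← Finset.sum_mul, hp₁, add_mul]
    have : ρ r + ∑ i : Fin r, C (c i) * ρ (i : ℕ) = 0 := hzero
    calc h r * p + ρ r + ((∑ i : Fin r, C (c i) * h (i : ℕ)) * p +
          ∑ i : Fin r, C (c i) * ρ (i : ℕ))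
        = (h r * p + (∑ i : Fin r, C (c i) * h (i : ℕ)) * p) +
          (ρ r + ∑ i : Fin r, C (c i) * ρ (i : ℕ)) := by abel
      _ = h r * p + (∑ i : Fin r, C (c i) * h (i : ℕ)) * p := by rw [this, add_zero]
  have hq0 : q ≠ 0 := fun h0 => by
    rw [h0, degree_zero] at hqdeg
    exact (WithBot.bot_ne_coe (a := s)) hqdeg
  have hlc : q₁.leadingCoeff * q.leadingCoeff ≠ 0 := by
    rw [hq₁monic.leadingCoeff, one_mul]
    exact leadingCoeff_ne_zero.mpr hq0
  have hq₁qdeg : (q₁ * q).degree = ((r : WithBot ℕ) + (s : WithBot ℕ)) := by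
    rw [degree_mul' hlc, hq₁deg, hqdeg]
  have hp₁0 : p₁ ≠ 0 := by
    intro h0
    rw [hmain, h0, zero_mul] at hq₁qdeg
    rw [degree_zero] at hq₁qdeg
    exact (WithBot.bot_ne_coe (a := r + s)) (by rw [hq₁qdeg]; exact_mod_cast rfl)
  have hlc2 : p₁.leadingCoeff * p.leadingCoeff ≠ 0 := by
    rw [hp.leadingCoeff, mul_one]
    exact leadingCoeff_ne_zero.mpr hp₁0
  have hp₁deg : p₁.degree = (s : WithBot ℕ) := by
    have e : p₁.degree + (r : WithBot ℕ) = (s : WithBot ℕ) + (r : WithBot ℕ) := by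
      rw [← hpdeg, ← degree_mul' hlc2, ← hmain, hq₁qdeg, hpdeg]
      rw [add_comm]
    exact WithBot.add_right_cancel (WithBot.coe_ne_bot) e
  exact ⟨p₁, q₁, by rw [hp₁deg, hqdeg], by rw [hq₁deg, hpdeg], hmain.symm, hq₁monic⟩
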